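/- arXiv:1904.03388 — 3 statements merged into one kernel-verified Lean document; each statement's English description precedes it below -/
import Mathlib

section
/- Let $c_0, \beta > 0$ and let $(a_m)_{m \geq 0}$ be a sequence of non-negative real numbers satisfying $a_m \leq c_0\, 2^{-m\beta} \sum_{k=0}^{m-1} a_k$ for all $m \geq 1$. Then for all $m \geq 1$ it holds $a_m \leq 2^{-m\beta} \exp\left(\frac{c_0}{1 - 2^{-\beta}}\right) a_0$. -/
theorem iterative_sequence_decay
    (c0 β : ℝ) (hc0 : 0 < c0) (hβ : 0 < β)
    (a : ℕ → ℝ) (ha : ∀ m, 0 ≤ a m)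
    (hrec : ∀ m : ℕ, 1 ≤ m →
      a m ≤ c0 * (2 : ℝ) ^ (-(m : ℝ) * β) * ∑ k ∈ Finset.range m, a k) :
    ∀ m : ℕ, 1 ≤ m →
      a m ≤ (2 : ℝ) ^ (-(m : ℝ) * β) * Real.exp (c0 / (1 - (2 : ℝ) ^ (-β))) * a 0 := by
  set r : ℝ := (2 : ℝ) ^ (-β) with hr
  have hr0 : 0 < r := Real.rpow_pos_of_pos (by norm_num) _
  have hr1 : r < 1 := Real.rpow_lt_one_of_one_lt_of_neg (by norm_num) (by linarith)
  have hpow : ∀ m : ℕ, (2 : ℝ) ^ (-(m : ℝ) * β) = r ^ m := by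
    intro m
    rw [hr, ← Real.rpow_natCast ((2:ℝ) ^ (-β)) m, ← Real.rpow_mul (by norm_num)]
    ring_nf
  have hS0 : ∀ m, 0 ≤ ∑ k ∈ Finset.range m, a k :=
    fun m => Finset.sum_nonneg fun k _ => ha k
  -- key induction
  have key : ∀ m : ℕ, ∑ k ∈ Finset.range m, a k ≤
      a 0 * Real.exp (c0 * ∑ j ∈ Finset.Ico 1 m, r ^ j) := by
    intro m
    induction m with
    | zero => simpa using ha 0
    | succ n ih =>
      rcases Nat.eq_zero_or_pos n with hn | hn
      · subst hn; simp
      · have hrecn := hrec n hn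
        rw [hpow] at hrecn
        have step : ∑ k ∈ Finset.range (n+1), a k ≤
            (∑ k ∈ Finset.range n, a k) * (1 + c0 * r ^ n) := by
          rw [Finset.sum_range_succ]
          nlinarith [hS0 n]
        have h1 : (1 : ℝ) + c0 * r ^ n ≤ Real.exp (c0 * r ^ n) := by
          have := Real.add_one_le_exp (c0 * r ^ n); linarith
        have h2 : (∑ k ∈ Finset.range n, a k) * (1 + c0 * r ^ n) ≤
            (a 0 * Real.exp (c0 * ∑ j ∈ Finset.Ico 1 n, r ^ j)) * Real.exp (c0 * r ^ n) := by
          have hpos : (0:ℝ) ≤ 1 + c0 * r ^ n := by positivity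
          calc (∑ k ∈ Finset.range n, a k) * (1 + c0 * r ^ n)
              ≤ (a 0 * Real.exp (c0 * ∑ j ∈ Finset.Ico 1 n, r ^ j)) * (1 + c0 * r ^ n) :=
                mul_le_mul_of_nonneg_right ih hpos
            _ ≤ _ := by
                exact mul_le_mul_of_nonneg_left h1
                  (mul_nonneg (ha 0) (Real.exp_nonneg _))
        calc ∑ k ∈ Finset.range (n+1), a k ≤ _ := step
          _ ≤ _ := h2
          _ = a 0 * Real.exp (c0 * ∑ j ∈ Finset.Ico 1 (n+1), r ^ j) := by
              rw [Finset.sum_Ico_succ_top hn, mul_add, Real.exp_add, mul_assoc]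
  intro m hm
  have hrecm := hrec m hm
  rw [hpow] at hrecm
  rw [hpow]
  have hgeom : 1 + ∑ j ∈ Finset.Ico 1 m, r ^ j ≤ 1 / (1 - r) := by
    have h1r : 0 < 1 - r := by linarith
    have e1 : 1 + ∑ j ∈ Finset.Ico 1 m, r ^ j = ∑ j ∈ Finset.range m, r ^ j := by
      rw [Finset.range_eq_Ico,
        ← Finset.sum_Ico_consecutive (fun j => r ^ j) (Nat.zero_le 1) hm]
      simp
    have e2 : ∑ j ∈ Finset.range m, r ^ j = (1 - r ^ m) / (1 - r) := by
      rw [geom_sum_eq (ne_of_lt hr1)]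
      rw [div_eq_div_iff (by linarith) (by linarith)]
      ring
    rw [e1, e2]
    gcongr
    have : 0 < r ^ m := pow_pos hr0 m
    linarith
  have hc0exp : c0 * Real.exp (c0 * ∑ j ∈ Finset.Ico 1 m, r ^ j) ≤
      Real.exp (c0 / (1 - r)) := by
    have hc0e : c0 ≤ Real.exp c0 := by
      have := Real.add_one_le_exp c0; linarith
    calc c0 * Real.exp (c0 * ∑ j ∈ Finset.Ico 1 m, r ^ j)
        ≤ Real.exp c0 * Real.exp (c0 * ∑ j ∈ Finset.Ico 1 m, r ^ j) := by
          apply mul_le_mul_of_nonneg_right hc0e (Real.exp_nonneg _)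
      _ = Real.exp (c0 * (1 + ∑ j ∈ Finset.Ico 1 m, r ^ j)) := by
          rw [← Real.exp_add]; congr 1; ring
      _ ≤ Real.exp (c0 / (1 - r)) := by
          apply Real.exp_le_exp.2
          rw [div_eq_mul_inv, ← one_div]
          exact mul_le_mul_of_nonneg_left hgeom hc0.le
  calc a m ≤ c0 * r ^ m * ∑ k ∈ Finset.range m, a k := hrecm
    _ ≤ c0 * r ^ m * (a 0 * Real.exp (c0 * ∑ j ∈ Finset.Ico 1 m, r ^ j)) := by
        apply mul_le_mul_of_nonneg_left (key m) (by positivity)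
    _ = r ^ m * (c0 * Real.exp (c0 * ∑ j ∈ Finset.Ico 1 m, r ^ j)) * a 0 := by ring
    _ ≤ r ^ m * Real.exp (c0 / (1 - r)) * a 0 := by
        apply mul_le_mul_of_nonneg_right _ (ha 0)
        exact mul_le_mul_of_nonneg_left hc0exp (by positivity)
end

section
/- Let $p \geq 2$ and $M \geq 0$, and define $\psi(t) := (M + t^{1/p'})^{p'-2} t^{2/p'}$ for $t \geq 0$, where $p' = p/(p-1)$. Then $\psi$ is comparable, with constants depending only on $p$, to the function which equals $M^{p'-2} t^{2/p'}$ for $t^{1/p'} \leq M$ and equals $t$ for $t^{1/p'} > M$; in particular $\psi$ is comparable to a continuous convex function on $[0,\infty)$. -/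
open Real Set

lemma two_rpow_half (e : ℝ) (he1 : 1 ≤ e) : (1/2 : ℝ) ≤ 2 ^ (e-2) := by
  have : (2:ℝ) ^ (-1 : ℝ) ≤ 2 ^ (e-2) :=
    Real.rpow_le_rpow_of_exponent_le one_le_two (by linarith)
  rwa [Real.rpow_neg_one, ← one_div] at this

lemma aux_bounds (e M t : ℝ) (he1 : 1 < e) (he2 : e ≤ 2) (hM : 0 ≤ M) (ht : 0 ≤ t) :
    (1/2) * (if t ^ (1/e) ≤ M then M ^ (e-2) * t ^ (2/e) else t)
      ≤ (M + t ^ (1/e)) ^ (e-2) * t ^ (2/e)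
    ∧ (M + t ^ (1/e)) ^ (e-2) * t ^ (2/e)
      ≤ (if t ^ (1/e) ≤ M then M ^ (e-2) * t ^ (2/e) else t) := by
  have he0 : (0:ℝ) < e := by linarith
  have hexp : e - 2 ≤ 0 := by linarith
  have h2half := two_rpow_half e he1.le
  by_cases hs : t ^ (1/e) ≤ M
  · rw [if_pos hs]
    rcases eq_or_lt_of_le ht with h0 | h0
    · rw [← h0, Real.zero_rpow (by positivity : (2/e) ≠ 0)]
      simp
    · have hspos : 0 < t ^ (1/e) := Real.rpow_pos_of_pos h0 _
      have hMpos : 0 < M := lt_of_lt_of_le hspos hs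
      have htq : (0:ℝ) ≤ t ^ (2/e) := Real.rpow_nonneg ht _
      constructor
      · have h2M : M + t ^ (1/e) ≤ 2 * M := by linarith
        have hle : ((2:ℝ) * M) ^ (e-2) ≤ (M + t ^ (1/e)) ^ (e-2) :=
          Real.rpow_le_rpow_of_nonpos (by linarith) h2M hexp
        rw [Real.mul_rpow (by norm_num) hM] at hle
        have hlow : (1/2) * M ^ (e-2) ≤ (M + t ^ (1/e)) ^ (e-2) := by
          nlinarith [Real.rpow_nonneg hM (e-2)]
        calc (1/2) * (M ^ (e-2) * t ^ (2/e)) = ((1/2) * M ^ (e-2)) * t ^ (2/e) := by ring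
        _ ≤ (M + t ^ (1/e)) ^ (e-2) * t ^ (2/e) := mul_le_mul_of_nonneg_right hlow htq
      · have hle : (M + t ^ (1/e)) ^ (e-2) ≤ M ^ (e-2) :=
          Real.rpow_le_rpow_of_nonpos hMpos (by linarith) hexp
        exact mul_le_mul_of_nonneg_right hle htq
  · rw [if_neg hs]
    push_neg at hs
    have h0 : 0 < t := by
      by_contra h
      push_neg at h
      have ht0 : t = 0 := le_antisymm h ht
      rw [ht0, Real.zero_rpow (by positivity : (1/e) ≠ 0)] at hs
      exact absurd hs (not_lt.mpr hM)
    have hspos : 0 < t ^ (1/e) := Real.rpow_pos_of_pos h0 _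
    have htq : (0:ℝ) ≤ t ^ (2/e) := Real.rpow_nonneg ht _
    have harith : 1/e * (e-2) + 2/e = 1 := by field_simp; ring
    have hst : (t ^ (1/e)) ^ (e-2) * t ^ (2/e) = t := by
      rw [← Real.rpow_mul ht, ← Real.rpow_add h0, harith, Real.rpow_one]
    constructor
    · have h2s : M + t ^ (1/e) ≤ 2 * t ^ (1/e) := by linarith
      have hle : ((2:ℝ) * t ^ (1/e)) ^ (e-2) ≤ (M + t ^ (1/e)) ^ (e-2) :=
        Real.rpow_le_rpow_of_nonpos (by linarith) h2s hexp
      rw [Real.mul_rpow (by norm_num) hspos.le] at hle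
      have hlow : (1/2) * (t ^ (1/e)) ^ (e-2) ≤ (M + t ^ (1/e)) ^ (e-2) := by
        nlinarith [Real.rpow_nonneg hspos.le (e-2)]
      calc (1/2) * t = ((1/2) * (t ^ (1/e)) ^ (e-2)) * t ^ (2/e) := by rw [mul_assoc, hst]
      _ ≤ (M + t ^ (1/e)) ^ (e-2) * t ^ (2/e) := mul_le_mul_of_nonneg_right hlow htq
    · have hle : (M + t ^ (1/e)) ^ (e-2) ≤ (t ^ (1/e)) ^ (e-2) :=
        Real.rpow_le_rpow_of_nonpos hspos (by linarith) hexp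
      calc (M + t ^ (1/e)) ^ (e-2) * t ^ (2/e) ≤ (t ^ (1/e)) ^ (e-2) * t ^ (2/e) :=
            mul_le_mul_of_nonneg_right hle htq
      _ = t := hst

open Real Set

lemma two_rpow_half' (e : ℝ) (he1 : 1 ≤ e) : (1/2 : ℝ) ≤ 2 ^ (1 - 2/e) := by
  have h : (-1 : ℝ) ≤ 1 - 2/e := by
    have h2e : 2/e ≤ 2 := by
      rw [div_le_iff₀ (by linarith)]
      nlinarith
    linarith
  have : (2:ℝ) ^ (-1 : ℝ) ≤ 2 ^ (1 - 2/e) :=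
    Real.rpow_le_rpow_of_exponent_le one_le_two h
  rwa [Real.rpow_neg_one, ← one_div] at this

lemma aux_phi (e M t : ℝ) (he1 : 1 < e) (he2 : e ≤ 2) (hM : 0 ≤ M) (ht : 0 ≤ t) :
    (1/2) * (if t ^ (1/e) ≤ M then M ^ (e-2) * t ^ (2/e) else t)
      ≤ t ^ (2/e) * (t + M ^ e) ^ (1 - 2/e)
    ∧ t ^ (2/e) * (t + M ^ e) ^ (1 - 2/e)
      ≤ (if t ^ (1/e) ≤ M then M ^ (e-2) * t ^ (2/e) else t) := by
  have he0 : (0:ℝ) < e := by linarith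
  have hq1 : 1 ≤ 2/e := by rw [le_div_iff₀ he0]; linarith
  have hexp : 1 - 2/e ≤ 0 := by linarith
  have h2half := two_rpow_half' e he1.le
  have hA : (0:ℝ) ≤ M ^ e := Real.rpow_nonneg hM _
  have htq : (0:ℝ) ≤ t ^ (2/e) := Real.rpow_nonneg ht _
  have hte : (t ^ (1/e)) ^ e = t := by
    rw [← Real.rpow_mul ht, one_div_mul_cancel (ne_of_gt he0), Real.rpow_one]
  by_cases hs : t ^ (1/e) ≤ M
  · rw [if_pos hs]
    rcases eq_or_lt_of_le ht with h0 | h0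
    · rw [← h0, Real.zero_rpow (by positivity : (2/e) ≠ 0)]
      simp
    · have hspos : 0 < t ^ (1/e) := Real.rpow_pos_of_pos h0 _
      have hMpos : 0 < M := lt_of_lt_of_le hspos hs
      have hApos : 0 < M ^ e := Real.rpow_pos_of_pos hMpos _
      have htA : t ≤ M ^ e := by
        calc t = (t ^ (1/e)) ^ e := hte.symm
        _ ≤ M ^ e := Real.rpow_le_rpow hspos.le hs he0.le
      have hAe : (M ^ e) ^ (1 - 2/e) = M ^ (e-2) := by
        rw [← Real.rpow_mul hM]
        congr 1
        field_simp
      constructor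
      · have h2A : t + M ^ e ≤ 2 * M ^ e := by linarith
        have hle : ((2:ℝ) * M ^ e) ^ (1 - 2/e) ≤ (t + M ^ e) ^ (1 - 2/e) :=
          Real.rpow_le_rpow_of_nonpos (by linarith) h2A hexp
        rw [Real.mul_rpow (by norm_num) hA] at hle
        have hlow : (1/2) * M ^ (e-2) ≤ (t + M ^ e) ^ (1 - 2/e) := by
          rw [← hAe]
          nlinarith [Real.rpow_nonneg hA (1 - 2/e)]
        calc (1/2) * (M ^ (e-2) * t ^ (2/e)) = ((1/2) * M ^ (e-2)) * t ^ (2/e) := by ring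
        _ ≤ (t + M ^ e) ^ (1 - 2/e) * t ^ (2/e) := mul_le_mul_of_nonneg_right hlow htq
        _ = t ^ (2/e) * (t + M ^ e) ^ (1 - 2/e) := by ring
      · have hle : (t + M ^ e) ^ (1 - 2/e) ≤ (M ^ e) ^ (1 - 2/e) :=
          Real.rpow_le_rpow_of_nonpos hApos (by linarith) hexp
        rw [hAe] at hle
        calc t ^ (2/e) * (t + M ^ e) ^ (1 - 2/e) = (t + M ^ e) ^ (1 - 2/e) * t ^ (2/e) := by ring
        _ ≤ M ^ (e-2) * t ^ (2/e) := mul_le_mul_of_nonneg_right hle htq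
  · rw [if_neg hs]
    push_neg at hs
    have h0 : 0 < t := by
      by_contra h
      push_neg at h
      have ht0 : t = 0 := le_antisymm h ht
      rw [ht0, Real.zero_rpow (by positivity : (1/e) ≠ 0)] at hs
      exact absurd hs (not_lt.mpr hM)
    have hAt : M ^ e ≤ t := by
      calc M ^ e ≤ (t ^ (1/e)) ^ e := Real.rpow_le_rpow hM hs.le he0.le
      _ = t := hte
    have htt : t ^ (2/e) * t ^ (1 - 2/e) = t := by
      rw [← Real.rpow_add h0]
      norm_num
    constructor
    · have h2t : t + M ^ e ≤ 2 * t := by linarith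
      have hle : ((2:ℝ) * t) ^ (1 - 2/e) ≤ (t + M ^ e) ^ (1 - 2/e) :=
        Real.rpow_le_rpow_of_nonpos (by linarith) h2t hexp
      rw [Real.mul_rpow (by norm_num) h0.le] at hle
      have hlow : (1/2) * t ^ (1 - 2/e) ≤ (t + M ^ e) ^ (1 - 2/e) := by
        nlinarith [Real.rpow_nonneg h0.le (1 - 2/e)]
      calc (1/2) * t = (1/2) * (t ^ (2/e) * t ^ (1 - 2/e)) := by rw [htt]
      _ = t ^ (2/e) * ((1/2) * t ^ (1 - 2/e)) := by ring
      _ ≤ t ^ (2/e) * (t + M ^ e) ^ (1 - 2/e) := by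
            exact mul_le_mul_of_nonneg_left hlow htq
    · have hle : (t + M ^ e) ^ (1 - 2/e) ≤ t ^ (1 - 2/e) :=
        Real.rpow_le_rpow_of_nonpos h0 (by linarith) hexp
      calc t ^ (2/e) * (t + M ^ e) ^ (1 - 2/e) ≤ t ^ (2/e) * t ^ (1 - 2/e) :=
            mul_le_mul_of_nonneg_left hle htq
      _ = t := htt

open Real Set

lemma convexOn_congr_aux {f g : ℝ → ℝ} {s : Set ℝ} (hf : ConvexOn ℝ s f)
    (h : ∀ x ∈ s, f x = g x) : ConvexOn ℝ s g := by
  refine ⟨hf.1, fun a ha b hb lam mu hl hmu hsum => ?_⟩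
  rw [← h _ ha, ← h _ hb, ← h _ (hf.1 ha hb hl hmu hsum)]
  exact hf.2 ha hb hl hmu hsum

lemma convexOn_perspective (q A : ℝ) (hq : 1 ≤ q) (hA : 0 < A) :
    ConvexOn ℝ (Set.Ici (0:ℝ)) (fun t => t ^ q * (t + A) ^ (1 - q)) := by
  have hconv := convexOn_rpow hq
  refine ⟨convex_Ici 0, fun a ha b hb lam mu hl hmu hsum => ?_⟩
  simp only [smul_eq_mul]
  have ha' : (0:ℝ) ≤ a := ha
  have hb' : (0:ℝ) ≤ b := hb
  have hDa : 0 < a + A := by linarith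
  have hDb : 0 < b + A := by linarith
  set T := lam * a + mu * b with hT
  have hT0 : 0 ≤ T := by positivity
  have hD : 0 < T + A := by linarith
  -- weights
  set lam' := lam * (a + A) / (T + A) with hlam'
  set mu' := mu * (b + A) / (T + A) with hmu'
  have hl' : 0 ≤ lam' := by positivity
  have hm' : 0 ≤ mu' := by positivity
  have hsum' : lam' + mu' = 1 := by
    rw [hlam', hmu', ← add_div, div_eq_one_iff_eq (ne_of_gt hD)]
    nlinarith
  have hx : a / (a + A) ∈ Set.Ici (0:ℝ) := Set.mem_Ici.mpr (by positivity)
  have hy : b / (b + A) ∈ Set.Ici (0:ℝ) := Set.mem_Ici.mpr (by positivity)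
  have hjensen := hconv.2 hx hy hl' hm' hsum'
  simp only [smul_eq_mul] at hjensen
  have hcomb : lam' * (a / (a + A)) + mu' * (b / (b + A)) = T / (T + A) := by
    rw [hlam', hmu']
    field_simp
    ring
  rw [hcomb] at hjensen
  -- multiply by (T + A)
  have key : (T + A) * (T / (T + A)) ^ q ≤
      lam * (a + A) * (a / (a + A)) ^ q + mu * (b + A) * (b / (b + A)) ^ q := by
    have := mul_le_mul_of_nonneg_left hjensen (le_of_lt hD)
    calc (T + A) * (T / (T + A)) ^ q
        ≤ (T + A) * (lam' * (a / (a + A)) ^ q + mu' * (b / (b + A)) ^ q) := this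
    _ = lam * (a + A) * (a / (a + A)) ^ q + mu * (b + A) * (b / (b + A)) ^ q := by
        rw [hlam', hmu']
        field_simp
  have hform : ∀ x D : ℝ, 0 ≤ x → 0 < D → D * (x / D) ^ q = x ^ q * D ^ (1 - q) := by
    intro x D hx0 hD0
    rw [Real.div_rpow hx0 hD0.le, Real.rpow_sub hD0, Real.rpow_one]
    field_simp
  calc T ^ q * (T + A) ^ (1 - q) = (T + A) * (T / (T + A)) ^ q := (hform T (T+A) hT0 hD).symm
  _ ≤ lam * (a + A) * (a / (a + A)) ^ q + mu * (b + A) * (b / (b + A)) ^ q := key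
  _ = lam * ((a + A) * (a / (a + A)) ^ q) + mu * ((b + A) * (b / (b + A)) ^ q) := by ring
  _ = lam * (a ^ q * (a + A) ^ (1 - q)) + mu * (b ^ q * (b + A) ^ (1 - q)) := by
      rw [hform a (a+A) ha' hDa, hform b (b+A) hb' hDb]


lemma continuousOn_phi (q A : ℝ) (hq : 0 < q) (hA : 0 < A) :
    ContinuousOn (fun t : ℝ => t ^ q * (t + A) ^ (1 - q)) (Set.Ici (0:ℝ)) := by
  apply ContinuousOn.mul
  · intro x _
    exact (Real.continuousAt_rpow_const x q (Or.inr hq.le)).continuousWithinAt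
  · intro x hx
    have hxA : (0:ℝ) < x + A := by
      have : (0:ℝ) ≤ x := hx
      linarith
    exact (((continuous_id.add continuous_const).continuousAt).rpow_const
      (Or.inl (ne_of_gt hxA))).continuousWithinAt

lemma phi_eq_id (q : ℝ) (hq : 1 ≤ q) :
    ∀ x ∈ Set.Ici (0:ℝ), x ^ q * (x + 0) ^ (1 - q) = x := by
  intro x hx
  rcases eq_or_lt_of_le (show (0:ℝ) ≤ x from hx) with h0 | h0
  · rw [← h0, Real.zero_rpow (by positivity : q ≠ 0)]
    ring
  · rw [add_zero, ← Real.rpow_add h0]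
    norm_num

theorem psi_comparable_to_convex
    (p M : ℝ) (hp : 2 ≤ p) (hM : 0 ≤ M) :
    ∃ c C : ℝ, 0 < c ∧ 0 < C ∧
      (∀ t : ℝ, 0 ≤ t →
        (c * (if t ^ (1 / (p / (p - 1))) ≤ M then
                M ^ (p / (p - 1) - 2) * t ^ (2 / (p / (p - 1)))
              else t) ≤
            (M + t ^ (1 / (p / (p - 1)))) ^ (p / (p - 1) - 2) * t ^ (2 / (p / (p - 1))) ∧
          (M + t ^ (1 / (p / (p - 1)))) ^ (p / (p - 1) - 2) * t ^ (2 / (p / (p - 1))) ≤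
            C * (if t ^ (1 / (p / (p - 1))) ≤ M then
                  M ^ (p / (p - 1) - 2) * t ^ (2 / (p / (p - 1)))
                else t))) ∧
      ∃ φ : ℝ → ℝ, ConvexOn ℝ (Set.Ici (0 : ℝ)) φ ∧ ContinuousOn φ (Set.Ici (0 : ℝ)) ∧
        ∀ t : ℝ, 0 ≤ t →
          c * φ t ≤ (M + t ^ (1 / (p / (p - 1)))) ^ (p / (p - 1) - 2) * t ^ (2 / (p / (p - 1))) ∧
            (M + t ^ (1 / (p / (p - 1)))) ^ (p / (p - 1) - 2) * t ^ (2 / (p / (p - 1))) ≤ C * φ t := by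
  set e := p / (p - 1) with he
  have hp1 : (0:ℝ) < p - 1 := by linarith
  have he1 : 1 < e := by
    rw [he, lt_div_iff₀ hp1]
    linarith
  have he2 : e ≤ 2 := by
    rw [he, div_le_iff₀ hp1]
    linarith
  have hq1 : 1 ≤ 2/e := by
    rw [le_div_iff₀ (by linarith : (0:ℝ) < e)]
    linarith
  refine ⟨1/2, 2, by norm_num, by norm_num, ?_, ?_⟩
  · intro t ht
    obtain ⟨h1, h2⟩ := aux_bounds e M t he1 he2 hM ht
    refine ⟨h1, h2.trans ?_⟩
    have hnn : 0 ≤ (if t ^ (1/e) ≤ M then M ^ (e-2) * t ^ (2/e) else t) := by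
      split_ifs
      · positivity
      · exact ht
    linarith
  · refine ⟨fun t => t ^ (2/e) * (t + M ^ e) ^ (1 - 2/e), ?_, ?_, ?_⟩
    · rcases eq_or_lt_of_le hM with h0 | h0
      · have hA0 : M ^ e = 0 := by
          rw [← h0, Real.zero_rpow (by positivity : e ≠ 0)]
        rw [hA0]
        exact convexOn_congr_aux (convexOn_id (convex_Ici 0))
          (fun x hx => (phi_eq_id (2/e) hq1 x hx).symm)
      · exact convexOn_perspective (2/e) (M ^ e) hq1 (Real.rpow_pos_of_pos h0 e)
    · rcases eq_or_lt_of_le hM with h0 | h0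
      · have hA0 : M ^ e = 0 := by
          rw [← h0, Real.zero_rpow (by positivity : e ≠ 0)]
        rw [hA0]
        exact continuous_id.continuousOn.congr
          (fun x hx => (phi_eq_id (2/e) hq1 x hx))
      · exact continuousOn_phi (2/e) (M ^ e) (by linarith) (Real.rpow_pos_of_pos h0 e)
    · intro t ht
      obtain ⟨hb1, hb2⟩ := aux_bounds e M t he1 he2 hM ht
      obtain ⟨hp1', hp2'⟩ := aux_phi e M t he1 he2 hM ht
      constructor
      · calc (1/2) * (t ^ (2/e) * (t + M ^ e) ^ (1 - 2/e))
            ≤ (1/2) * (if t ^ (1/e) ≤ M then M ^ (e-2) * t ^ (2/e) else t) := by linarith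
        _ ≤ (M + t ^ (1/e)) ^ (e-2) * t ^ (2/e) := hb1
      · calc (M + t ^ (1/e)) ^ (e-2) * t ^ (2/e)
            ≤ (if t ^ (1/e) ≤ M then M ^ (e-2) * t ^ (2/e) else t) := hb2
        _ ≤ 2 * (t ^ (2/e) * (t + M ^ e) ^ (1 - 2/e)) := by linarith
end

section
/- Let $p \geq 2$ and define $A(Q) = |Q|^{p-2}Q$ on $\mathbb{R}^2 \setminus \{0\}$, which is differentiable there with derivative $DA$. Define $H(P,Q) := A(P) - A(Q) - (DA)(Q)(P-Q)$. Then there exists $c > 0$ depending only on $p$ such that for all $P, Q \in \mathbb{R}^2$ with $Q \neq 0$ and $|P - Q| \geq \frac{1}{2}|Q|$: $|H(P,Q)| \leq c\,|A(P) - A(Q)| \cdot \frac{|P-Q|}{|Q| + |P-Q|}$. -/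
open Real RealInnerProductSpace

variable {E : Type*} [NormedAddCommGroup E] [InnerProductSpace ℝ E]

-- derivative of A at Q ≠ 0, with explicit form
lemma A_hasFDerivAt (p : ℝ) (Q : E) (hQ : Q ≠ 0) :
    HasFDerivAt (fun R : E => ‖R‖ ^ (p - 2) • R)
      ((‖Q‖ ^ (p - 2)) • ContinuousLinearMap.id ℝ E +
        ((((p - 2) / 2) * (‖Q‖ ^ 2 : ℝ) ^ ((p - 2) / 2 - 1)) • (2 • innerSL ℝ Q)).smulRight Q)
      Q := by
  have hq2 : (‖Q‖ ^ 2 : ℝ) ≠ 0 := pow_ne_zero 2 (norm_ne_zero_iff.2 hQ)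
  have h1 : HasFDerivAt (fun R : E => (‖R‖ ^ 2 : ℝ)) (2 • innerSL ℝ Q) Q :=
    (hasStrictFDerivAt_norm_sq Q).hasFDerivAt
  have h2 : HasDerivAt (fun y : ℝ => y ^ ((p - 2) / 2))
      (((p - 2) / 2) * (‖Q‖ ^ 2 : ℝ) ^ ((p - 2) / 2 - 1)) (‖Q‖ ^ 2) :=
    Real.hasDerivAt_rpow_const (Or.inl hq2)
  have h3 := h2.comp_hasFDerivAt Q h1
  have h4 := h3.smul (hasFDerivAt_id Q)
  have key : ∀ R : E, (‖R‖ ^ 2 : ℝ) ^ ((p - 2) / 2) = ‖R‖ ^ (p - 2) := by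
    intro R
    rw [← Real.rpow_natCast ‖R‖ 2, ← Real.rpow_mul (norm_nonneg R)]
    push_cast
    ring_nf
  have hfun : (fun R : E => (‖R‖ ^ 2 : ℝ) ^ ((p - 2) / 2) • R)
      = fun R : E => ‖R‖ ^ (p - 2) • R := by
    funext R; rw [key]
  simp only [Function.comp, id] at h4
  rw [show ((fun y : ℝ => y ^ ((p - 2) / 2)) ∘ fun R : E => (‖R‖ ^ 2 : ℝ)) • (id : E → E)
      = fun R : E => ‖R‖ ^ (p - 2) • R from funext fun R => congrArg (· • R) (key R), key] at h4
  exact h4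

lemma D_bound (p : ℝ) (hp : 2 ≤ p) (Q v : E) (hQ : Q ≠ 0) :
    ‖((‖Q‖ ^ (p - 2)) • ContinuousLinearMap.id ℝ E +
        ((((p - 2) / 2) * (‖Q‖ ^ 2 : ℝ) ^ ((p - 2) / 2 - 1)) • (2 • innerSL ℝ Q)).smulRight Q) v‖
      ≤ (p - 1) * ‖Q‖ ^ (p - 2) * ‖v‖ := by
  have hQ0 : (0:ℝ) < ‖Q‖ := norm_pos_iff.2 hQ
  have key : (‖Q‖ ^ 2 : ℝ) ^ ((p - 2) / 2 - 1) * ‖Q‖ ^ 2 = ‖Q‖ ^ (p - 2) := by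
    rw [← Real.rpow_natCast ‖Q‖ 2, ← Real.rpow_mul (norm_nonneg Q),
      ← Real.rpow_add hQ0]
    push_cast
    ring_nf
  have ha : (0:ℝ) ≤ ‖Q‖ ^ (p - 2) := Real.rpow_nonneg (norm_nonneg Q) _
  have hb : (0:ℝ) ≤ (‖Q‖ ^ 2 : ℝ) ^ ((p - 2) / 2 - 1) := Real.rpow_nonneg (by positivity) _
  have happ : ((‖Q‖ ^ (p - 2)) • ContinuousLinearMap.id ℝ E +
        ((((p - 2) / 2) * (‖Q‖ ^ 2 : ℝ) ^ ((p - 2) / 2 - 1)) • (2 • innerSL ℝ Q)).smulRight Q) v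
      = (‖Q‖ ^ (p - 2)) • v +
        (((p - 2) / 2) * (‖Q‖ ^ 2 : ℝ) ^ ((p - 2) / 2 - 1) * (2 * ⟪Q, v⟫)) • Q := by
    simp [ContinuousLinearMap.smulRight_apply, mul_assoc]
  rw [happ]
  refine (norm_add_le _ _).trans ?_
  rw [norm_smul, norm_smul, Real.norm_eq_abs, Real.norm_eq_abs, abs_of_nonneg ha, abs_mul,
    abs_mul, abs_of_nonneg (show (0:ℝ) ≤ (p - 2) / 2 by linarith), abs_of_nonneg hb]
  have hin : |2 * ⟪Q, v⟫| ≤ 2 * (‖Q‖ * ‖v‖) := by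
    rw [abs_mul, abs_two]
    have := abs_real_inner_le_norm Q v
    linarith
  have h1 : (0:ℝ) ≤ (p - 2) / 2 * (‖Q‖ ^ 2 : ℝ) ^ ((p - 2) / 2 - 1) :=
    mul_nonneg (by linarith) hb
  nlinarith [mul_le_mul_of_nonneg_right (mul_le_mul_of_nonneg_left hin h1) hQ0.le,
    mul_le_mul_of_nonneg_right (le_of_eq key) (norm_nonneg v), norm_nonneg v, hQ0.le]

lemma mono_ineq (p : ℝ) (hp : 2 ≤ p) (P Q : E) :
    (1/2) * (‖P‖ ^ (p - 2) + ‖Q‖ ^ (p - 2)) * ‖P - Q‖ ^ 2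
      ≤ ⟪(‖P‖ ^ (p - 2) • P) - (‖Q‖ ^ (p - 2) • Q), P - Q⟫ := by
  have expand : ⟪(‖P‖ ^ (p - 2) • P) - (‖Q‖ ^ (p - 2) • Q), P - Q⟫
      = ‖P‖ ^ (p - 2) * ‖P‖ ^ 2 - ‖P‖ ^ (p - 2) * ⟪P, Q⟫
        - ‖Q‖ ^ (p - 2) * ⟪P, Q⟫ + ‖Q‖ ^ (p - 2) * ‖Q‖ ^ 2 := by
    simp only [inner_sub_left, inner_sub_right, real_inner_smul_left,
      real_inner_self_eq_norm_sq, real_inner_comm P Q]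
    ring
  have hnorm : ‖P - Q‖ ^ 2 = ‖P‖ ^ 2 - 2 * ⟪P, Q⟫ + ‖Q‖ ^ 2 := norm_sub_sq_real P Q
  have sign : 0 ≤ (‖P‖ ^ (p - 2) - ‖Q‖ ^ (p - 2)) * (‖P‖ ^ 2 - ‖Q‖ ^ 2) := by
    rcases le_total ‖P‖ ‖Q‖ with h | h
    · have h1 : ‖P‖ ^ (p - 2) ≤ ‖Q‖ ^ (p - 2) :=
        Real.rpow_le_rpow (norm_nonneg P) h (by linarith)
      have h2 : ‖P‖ ^ 2 ≤ ‖Q‖ ^ 2 := pow_le_pow_left₀ (norm_nonneg P) h 2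
      nlinarith
    · have h1 : ‖Q‖ ^ (p - 2) ≤ ‖P‖ ^ (p - 2) :=
        Real.rpow_le_rpow (norm_nonneg Q) h (by linarith)
      have h2 : ‖Q‖ ^ 2 ≤ ‖P‖ ^ 2 := pow_le_pow_left₀ (norm_nonneg Q) h 2
      nlinarith
  rw [expand, hnorm]
  nlinarith [sign]

theorem taylor_remainder_far_case
    (p : ℝ) (hp : 2 ≤ p) :
    ∃ c : ℝ, 0 < c ∧
      ∀ P Q : EuclideanSpace ℝ (Fin 2), Q ≠ 0 → ‖Q‖ / 2 ≤ ‖P - Q‖ →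
        ‖(‖P‖ ^ (p - 2) • P) - (‖Q‖ ^ (p - 2) • Q) -
            fderiv ℝ (fun R : EuclideanSpace ℝ (Fin 2) => ‖R‖ ^ (p - 2) • R) Q (P - Q)‖ ≤
          c * ‖(‖P‖ ^ (p - 2) • P) - (‖Q‖ ^ (p - 2) • Q)‖ *
            (‖P - Q‖ / (‖Q‖ + ‖P - Q‖)) := by
  refine ⟨3 * (2 * p - 1), by linarith, ?_⟩
  intro P Q hQ hfar
  have hQ0 : (0:ℝ) < ‖Q‖ := norm_pos_iff.2 hQ
  have hPQ : (0:ℝ) < ‖P - Q‖ := lt_of_lt_of_le (by linarith) hfar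
  have hD := A_hasFDerivAt p Q hQ
  rw [hD.fderiv]
  set D := (‖Q‖ ^ (p - 2)) • ContinuousLinearMap.id ℝ (EuclideanSpace ℝ (Fin 2)) +
      ((((p - 2) / 2) * (‖Q‖ ^ 2 : ℝ) ^ ((p - 2) / 2 - 1)) • (2 • innerSL ℝ Q)).smulRight Q
    with hDdef
  set N := ‖(‖P‖ ^ (p - 2) • P) - (‖Q‖ ^ (p - 2) • Q)‖ with hN
  have hN0 : 0 ≤ N := norm_nonneg _
  have hC : ‖Q‖ ^ (p - 2) * ‖P - Q‖ ≤ 2 * N := by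
    have h1 : ⟪(‖P‖ ^ (p - 2) • P) - (‖Q‖ ^ (p - 2) • Q), P - Q⟫ ≤ N * ‖P - Q‖ :=
      real_inner_le_norm _ _
    have h2 := mono_ineq p hp P Q
    have h3 : (0:ℝ) ≤ ‖P‖ ^ (p - 2) := Real.rpow_nonneg (norm_nonneg P) _
    have h4 : (‖Q‖ ^ (p - 2) * ‖P - Q‖) * ‖P - Q‖ ≤ (2 * N) * ‖P - Q‖ := by
      nlinarith [sq_nonneg ‖P - Q‖]
    exact le_of_mul_le_mul_right h4 hPQ
  have hDb := D_bound p hp Q (P - Q) hQ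
  rw [← hDdef] at hDb
  have hmain : ‖(‖P‖ ^ (p - 2) • P) - (‖Q‖ ^ (p - 2) • Q) - D (P - Q)‖ ≤ (2 * p - 1) * N := by
    refine (norm_sub_le _ _).trans ?_
    have h5 : (p - 1) * (‖Q‖ ^ (p - 2) * ‖P - Q‖) ≤ (p - 1) * (2 * N) :=
      mul_le_mul_of_nonneg_left hC (by linarith)
    nlinarith [hDb]
  refine hmain.trans ?_
  have hr : (1:ℝ)/3 ≤ ‖P - Q‖ / (‖Q‖ + ‖P - Q‖) := by
    rw [le_div_iff₀ (by linarith)]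
    linarith
  have h0 : (0:ℝ) ≤ 3 * ((2 * p - 1) * N) := by nlinarith
  calc (2 * p - 1) * N = 3 * ((2 * p - 1) * N) * (1/3) := by ring
    _ ≤ 3 * ((2 * p - 1) * N) * (‖P - Q‖ / (‖Q‖ + ‖P - Q‖)) :=
        mul_le_mul_of_nonneg_left hr h0
    _ = 3 * (2 * p - 1) * N * (‖P - Q‖ / (‖Q‖ + ‖P - Q‖)) := by ring
end
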